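/- If u ∈ U_ad, then both split states w⁺(u) = ½(u + f(u)/αˣ(u)) and w⁻(u) = ½(u − f(u)/αˣ(u)) belong to U_ad, where αˣ(u) = |v₁| + √(3p₁₁/ρ) is the maximal x-direction wave speed of u. -/

import Mathlib

noncomputable section

/-- Density of a Ten-Moment state. -/
def rho (u : Fin 6 → ℝ) : ℝ := u 0

/-- First velocity component. -/
def v1 (u : Fin 6 → ℝ) : ℝ := u 1 / u 0

/-- Second velocity component. -/
def v2 (u : Fin 6 → ℝ) : ℝ := u 2 / u 0

/-- Pressure component `p₁₁`. -/
def p11 (u : Fin 6 → ℝ) : ℝ := 2 * u 3 - (u 1) ^ 2 / u 0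

/-- Pressure component `p₁₂`. -/
def p12 (u : Fin 6 → ℝ) : ℝ := 2 * u 4 - u 1 * u 2 / u 0

/-- Pressure component `p₂₂`. -/
def p22 (u : Fin 6 → ℝ) : ℝ := 2 * u 5 - (u 2) ^ 2 / u 0

/-- The admissible set: positive density and positive definite pressure tensor. -/
def Uad : Set (Fin 6 → ℝ) :=
  {u | 0 < rho u ∧ 0 < p11 u ∧ 0 < p11 u * p22 u - (p12 u) ^ 2}

/-- The x-direction flux of the Ten-Moment system. -/
def fluxX (u : Fin 6 → ℝ) : Fin 6 → ℝ :=
  ![rho u * v1 u,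
    rho u * (v1 u) ^ 2 + p11 u,
    rho u * v1 u * v2 u + p12 u,
    (u 3 + p11 u) * v1 u,
    u 4 * v1 u + (p11 u * v2 u + p12 u * v1 u) / 2,
    u 5 * v1 u + p12 u * v2 u]

/-- The maximal wave speed in the x-direction. -/
def alphaX (u : Fin 6 → ℝ) : ℝ := |v1 u| + Real.sqrt (3 * p11 u / rho u)

set_option maxHeartbeats 2000000 in
lemma key (u : Fin 6 → ℝ) (hu : u ∈ Uad) (s : ℝ)
    (hA : 0 < u 0 + s * u 1)
    (hK : s ^ 2 * (2 * u 3 * u 0 - (u 1) ^ 2) < (u 0 + s * u 1) ^ 2) :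
    (2 : ℝ)⁻¹ • (u + s • fluxX u) ∈ Uad := by
  obtain ⟨hρ, hp, hd⟩ := hu
  rw [rho] at hρ
  have hρ' : u 0 ≠ 0 := ne_of_gt hρ
  have hA' : u 0 + s * u 1 ≠ 0 := ne_of_gt hA
  have hP11 : 0 < 2 * u 3 * u 0 - (u 1) ^ 2 := by
    have h := mul_pos hp hρ
    rw [p11] at h
    have heq : (2 * u 3 - (u 1) ^ 2 / u 0) * u 0 = 2 * u 3 * u 0 - (u 1) ^ 2 := by
      field_simp
    rwa [heq] at h
  have hDet : 0 < (2 * u 3 * u 0 - (u 1) ^ 2) * (2 * u 5 * u 0 - (u 2) ^ 2)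
      - (2 * u 4 * u 0 - u 1 * u 2) ^ 2 := by
    have h := mul_pos hd (mul_pos hρ hρ)
    rw [p11, p12, p22] at h
    have heq : ((2 * u 3 - (u 1) ^ 2 / u 0) * (2 * u 5 - (u 2) ^ 2 / u 0)
        - (2 * u 4 - u 1 * u 2 / u 0) ^ 2) * (u 0 * u 0)
        = (2 * u 3 * u 0 - (u 1) ^ 2) * (2 * u 5 * u 0 - (u 2) ^ 2)
          - (2 * u 4 * u 0 - u 1 * u 2) ^ 2 := by
      field_simp
    rwa [heq] at h
  have hK' : 0 < (u 0 + s * u 1) ^ 2 - s ^ 2 * (2 * u 3 * u 0 - (u 1) ^ 2) := by linarith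
  set W := (2 : ℝ)⁻¹ • (u + s • fluxX u) with hW
  have e : ∀ i, W i = (u i + s * fluxX u i) / 2 := by
    intro i
    simp [hW, Pi.smul_apply, Pi.add_apply, smul_eq_mul]
    ring
  have f0 : fluxX u 0 = rho u * v1 u := rfl
  have f1 : fluxX u 1 = rho u * (v1 u) ^ 2 + p11 u := rfl
  have f2 : fluxX u 2 = rho u * v1 u * v2 u + p12 u := rfl
  have f3 : fluxX u 3 = (u 3 + p11 u) * v1 u := rfl
  have f4 : fluxX u 4 = u 4 * v1 u + (p11 u * v2 u + p12 u * v1 u) / 2 := rfl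
  have f5 : fluxX u 5 = u 5 * v1 u + p12 u * v2 u := rfl
  have h0 : W 0 = (u 0 + s * u 1) / 2 := by
    rw [e, f0]; simp only [rho, v1]; field_simp
  have h1 : W 1 = (u 1 + s * (2 * u 3)) / 2 := by
    rw [e, f1]; simp only [rho, v1, p11]; field_simp; all_goals ring
  have h2 : W 2 = (u 2 + s * (2 * u 4)) / 2 := by
    rw [e, f2]; simp only [rho, v1, v2, p12]; field_simp; all_goals ring
  have h3 : W 3 = (u 3 * (u 0) ^ 2 + s * (3 * u 3 * u 0 - (u 1) ^ 2) * u 1) / (2 * (u 0) ^ 2) := by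
    rw [e, f3]; simp only [v1, p11]; field_simp; all_goals ring
  have h4 : W 4 = (u 4 * (u 0) ^ 2 + s * (2 * u 4 * u 1 * u 0 + u 3 * u 2 * u 0 - (u 1) ^ 2 * u 2)) / (2 * (u 0) ^ 2) := by
    rw [e, f4]; simp only [v1, v2, p11, p12]; field_simp; all_goals ring
  have h5 : W 5 = (u 5 * (u 0) ^ 2 + s * (u 5 * u 1 * u 0 + 2 * u 4 * u 2 * u 0 - u 1 * (u 2) ^ 2)) / (2 * (u 0) ^ 2) := by
    rw [e, f5]; simp only [v1, v2, p12]; field_simp; all_goals ring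
  have hW0 : 0 < W 0 := by rw [h0]; linarith
  have hW0' : W 0 ≠ 0 := ne_of_gt hW0
  have hp11W : p11 W = ((2 * u 3 * u 0 - (u 1) ^ 2) *
      ((u 0 + s * u 1) ^ 2 - s ^ 2 * (2 * u 3 * u 0 - (u 1) ^ 2))) /
      (2 * (u 0) ^ 2 * (u 0 + s * u 1)) := by
    rw [p11, h3, h1, h0]
    field_simp
    ring
  refine ⟨?_, ?_, ?_⟩
  · rw [rho]; exact hW0
  · rw [hp11W]; positivity
  · have hdet : p11 W * p22 W - (p12 W) ^ 2 =
        (((u 0 + s * u 1) ^ 2 - s ^ 2 * (2 * u 3 * u 0 - (u 1) ^ 2)) *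
          ((2 * u 3 * u 0 - (u 1) ^ 2) * (2 * u 5 * u 0 - (u 2) ^ 2)
            - (2 * u 4 * u 0 - u 1 * u 2) ^ 2)) / (4 * (u 0) ^ 4) := by
      rw [p11, p12, p22, h0, h1, h2, h3, h4, h5]
      field_simp
      ring
    rw [hdet]; positivity


/-- The Lax-Friedrichs split states `w±(u) = ½(u ± f(u)/αˣ(u))` of an admissible
state are admissible. -/
theorem split_states_admissible (u : Fin 6 → ℝ) (hu : u ∈ Uad) :
    (2 : ℝ)⁻¹ • (u + (alphaX u)⁻¹ • fluxX u) ∈ Uad ∧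
    (2 : ℝ)⁻¹ • (u - (alphaX u)⁻¹ • fluxX u) ∈ Uad := by
  obtain ⟨hρ, hp, hd⟩ := hu
  rw [rho] at hρ
  have hρ' : u 0 ≠ 0 := ne_of_gt hρ
  set c := Real.sqrt (3 * p11 u / rho u) with hc
  have hcpos : 0 < c := by
    apply Real.sqrt_pos.mpr
    have h3p : 0 < 3 * p11 u := by linarith
    have : rho u = u 0 := rfl
    rw [this]
    exact div_pos h3p hρ
  have hc2 : c ^ 2 = 3 * p11 u / rho u := by
    rw [hc, sq, Real.mul_self_sqrt]
    have : rho u = u 0 := rfl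
    rw [this]
    positivity
  have hα : 0 < alphaX u := by
    rw [alphaX, ← hc]
    have := abs_nonneg (v1 u)
    linarith
  have hα' : alphaX u ≠ 0 := ne_of_gt hα
  have main : ∀ ε : ℝ, ε = 1 ∨ ε = -1 →
      (0 < u 0 + (ε * (alphaX u)⁻¹) * u 1 ∧
       (ε * (alphaX u)⁻¹) ^ 2 * (2 * u 3 * u 0 - (u 1) ^ 2) < (u 0 + (ε * (alphaX u)⁻¹) * u 1) ^ 2) := by
    intro ε hε
    have hε2 : ε ^ 2 = 1 := by rcases hε with h | h <;> rw [h] <;> ring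
    have hev : -|v1 u| ≤ ε * v1 u := by
      rcases hε with h | h
      · rw [h, one_mul]; exact neg_abs_le _
      · rw [h, neg_one_mul]; exact neg_le_neg (le_abs_self _)
    have hac : c ≤ alphaX u + ε * v1 u := by
      rw [alphaX, ← hc]
      linarith
    have hacpos : 0 < alphaX u + ε * v1 u := lt_of_lt_of_le hcpos hac
    have hv1 : v1 u = u 1 / u 0 := rfl
    have hAeq : u 0 + (ε * (alphaX u)⁻¹) * u 1 = u 0 * (alphaX u + ε * v1 u) / alphaX u := by
      rw [hv1]; field_simp
    have hsq : 3 * p11 u / u 0 ≤ (alphaX u + ε * v1 u) ^ 2 := by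
      have := hc2
      rw [show rho u = u 0 from rfl] at this
      nlinarith [hcpos.le, hac, hacpos]
    have h3le : 3 * p11 u ≤ (alphaX u + ε * v1 u) ^ 2 * u 0 := (div_le_iff₀ hρ).mp hsq
    have hPe : 2 * u 3 * u 0 - (u 1) ^ 2 = p11 u * u 0 := by
      rw [p11]; field_simp; all_goals ring
    have hstep : 2 * u 3 * u 0 - (u 1) ^ 2 < u 0 ^ 2 * (alphaX u + ε * v1 u) ^ 2 := by
      rw [hPe]
      nlinarith [mul_pos hp hρ, mul_le_mul_of_nonneg_right h3le hρ.le]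
    refine ⟨by rw [hAeq]; positivity, ?_⟩
    rw [hAeq]
    have hrw : (u 0 * (alphaX u + ε * v1 u) / alphaX u) ^ 2
        = u 0 ^ 2 * (alphaX u + ε * v1 u) ^ 2 / alphaX u ^ 2 := by ring
    rw [hrw, lt_div_iff₀ (by positivity : (0:ℝ) < alphaX u ^ 2)]
    have hinv : (alphaX u)⁻¹ * alphaX u = 1 := inv_mul_cancel₀ hα'
    have hcanc : (ε * (alphaX u)⁻¹) ^ 2 * (2 * u 3 * u 0 - (u 1) ^ 2) * alphaX u ^ 2
        = 2 * u 3 * u 0 - (u 1) ^ 2 := by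
      rw [show (ε * (alphaX u)⁻¹) ^ 2 * (2 * u 3 * u 0 - (u 1) ^ 2) * alphaX u ^ 2
        = ε ^ 2 * (2 * u 3 * u 0 - (u 1) ^ 2) * ((alphaX u)⁻¹ * alphaX u) ^ 2 from by ring,
        hinv, hε2]
      ring
    rw [hcanc]
    exact hstep
  obtain ⟨hA1, hK1⟩ := main 1 (Or.inl rfl)
  obtain ⟨hA2, hK2⟩ := main (-1) (Or.inr rfl)
  constructor
  · have := key u ⟨hρ, hp, hd⟩ ((alphaX u)⁻¹) (by simpa using hA1) (by simpa using hK1)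
    simpa using this
  · have h := key u ⟨hρ, hp, hd⟩ (-(alphaX u)⁻¹) (by simpa using hA2) (by simpa using hK2)
    have heq : u - (alphaX u)⁻¹ • fluxX u = u + (-(alphaX u)⁻¹) • fluxX u := by
      rw [sub_eq_add_neg, neg_smul]
    rw [heq]
    exact h
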